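/- Let N be a positive integer and t > -log N. The sequence δ_n(t,N) = ∫_N^{n+1} dx/(t+log x) - Σ_{k=N}^n 1/(t+log(k+1/2)) for n ≥ N is positive, strictly increasing, and bounded above; consequently the limit δ(t,N) = lim_{n→∞} δ_n(t,N) exists and is positive. -/

import Mathlib

open Real Filter MeasureTheory Finset Topology

/-- The sequence `δ_n(t,N) = ∫_N^{n+1} dx/(t+log x) - Σ_{k=N}^n 1/(t+log(k+1/2))`. -/
noncomputable def deltaSeq (N : ℕ) (t : ℝ) (n : ℕ) : ℝ :=
  (∫ x in (N : ℝ)..((n : ℝ) + 1), 1 / (t + Real.log x)) -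
    ∑ k ∈ Finset.Icc N n, 1 / (t + Real.log ((k : ℝ) + 1/2))

theorem stmt_11 (N : ℕ) (hN : 0 < N) (t : ℝ) (ht : -Real.log N < t) :
    (∀ n : ℕ, N ≤ n → 0 < deltaSeq N t n) ∧
    (∀ n : ℕ, N ≤ n → deltaSeq N t n < deltaSeq N t (n + 1)) ∧
    (∃ B : ℝ, ∀ n : ℕ, N ≤ n → deltaSeq N t n ≤ B) ∧
    ∃ L : ℝ, 0 < L ∧ Filter.Tendsto (deltaSeq N t) Filter.atTop (𝓝 L) := by
  have hN1 : (1:ℝ) ≤ (N:ℝ) := by exact_mod_cast hN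
  have h0 : 0 < t + Real.log N := by linarith
  have hIci : Set.Ici (N:ℝ) ⊆ Set.Ioi (0:ℝ) := fun x hx => lt_of_lt_of_le (by linarith : (0:ℝ) < N) hx
  have hposx : ∀ x : ℝ, (N:ℝ) ≤ x → 0 < t + Real.log x := by
    intro x hx
    have := Real.log_le_log (by linarith) hx
    linarith
  have hcont : ContinuousOn (fun x : ℝ => 1 / (t + Real.log x)) (Set.Ici (N:ℝ)) := by
    apply ContinuousOn.div continuousOn_const
    · exact continuousOn_const.add (Real.continuousOn_log.mono (fun x hx => by
        simp only [Set.mem_compl_iff, Set.mem_singleton_iff]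
        exact ne_of_gt (hIci hx)))
    · exact fun x hx => (hposx x hx).ne'
  have hint : ∀ a b : ℝ, (N:ℝ) ≤ a → (N:ℝ) ≤ b →
      IntervalIntegrable (fun x : ℝ => 1 / (t + Real.log x)) volume a b := by
    intro a b ha hb
    apply ContinuousOn.intervalIntegrable
    apply hcont.mono
    intro x hx
    exact le_trans (le_min ha hb) hx.1
  have hanti : ∀ a b : ℝ, (N:ℝ) ≤ a → a ≤ b →
      1 / (t + Real.log b) ≤ 1 / (t + Real.log a) := by
    intro a b ha hab
    apply one_div_le_one_div_of_le (hposx a ha)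
    have := Real.log_le_log (by linarith) hab
    linarith
  -- strict convexity
  have hconv : StrictConvexOn ℝ (Set.Ici (N:ℝ)) (fun x : ℝ => 1 / (t + Real.log x)) := by
    have himg : (fun x : ℝ => t + Real.log x) '' Set.Ici (N:ℝ) = Set.Ici (t + Real.log N) := by
      ext y
      constructor
      · rintro ⟨x, hx, rfl⟩
        have := Real.log_le_log (by linarith) hx
        exact by simpa using add_le_add_left this t
      · intro hy
        refine ⟨Real.exp (y - t), ?_, by simp [Real.log_exp]⟩
        have h1 : Real.log N ≤ y - t := by
          simp only [Set.mem_Ici] at hy; linarith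
        have h2 : Real.exp (Real.log N) ≤ Real.exp (y - t) := Real.exp_le_exp.mpr h1
        rw [Real.exp_log (by linarith)] at h2
        exact h2
    have hinv : StrictConvexOn ℝ (Set.Ici (t + Real.log N)) (fun y : ℝ => y⁻¹) := by
      have h := (strictConvexOn_zpow (m := -1) (by decide) (by decide)).subset
        (fun y hy => lt_of_lt_of_le h0 hy) (convex_Ici _)
      simp only [Int.reduceNeg, zpow_neg, zpow_one] at h
      exact h
    have hlog : StrictConcaveOn ℝ (Set.Ici (N:ℝ)) (fun x : ℝ => t + Real.log x) := by
      have h := (strictConcaveOn_log_Ioi.subset hIci (convex_Ici _)).add_const t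
      have heq : (Real.log + fun _ : ℝ => t) = fun x : ℝ => t + Real.log x := by
        funext x; simp [add_comm]
      rwa [heq] at h
    have hanti' : StrictAntiOn (fun y : ℝ => y⁻¹)
        ((fun x : ℝ => t + Real.log x) '' Set.Ici (N:ℝ)) := by
      rw [himg]
      intro x hx y hy hxy
      exact inv_strictAnti₀ (lt_of_lt_of_le h0 hx) hxy
    have hinj : Set.InjOn (fun x : ℝ => t + Real.log x) (Set.Ici (N:ℝ)) := by
      intro a ha b hb h
      have hlab : Real.log a = Real.log b := by
        simpa using congrArg (fun z => z - t) h
      exact Real.log_injOn_pos (Set.mem_Ioi.mp (hIci ha)) (Set.mem_Ioi.mp (hIci hb))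
        (by simpa using hlab)
    have h := (himg ▸ hinv : StrictConvexOn ℝ ((fun x : ℝ => t + Real.log x) '' Set.Ici (N:ℝ))
        (fun y : ℝ => y⁻¹)).comp_strictConcaveOn hlog hanti' hinj
    have heq : (fun y : ℝ => y⁻¹) ∘ (fun x : ℝ => t + Real.log x)
        = fun x : ℝ => 1 / (t + Real.log x) := by
      funext x; simp [Function.comp, one_div]
    rwa [heq] at h
  -- midpoint inequality on [c, c+1]
  have hmid : ∀ c : ℝ, (N:ℝ) ≤ c →
      1 / (t + Real.log (c + 1/2)) < ∫ x in c..(c+1), 1 / (t + Real.log x) := by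
    intro c hc
    set m : ℝ := c + 1/2 with hm
    have key : ∀ u ∈ Set.Ioc (0:ℝ) (1/2),
        2 * (1 / (t + Real.log m)) <
          1 / (t + Real.log (m - u)) + 1 / (t + Real.log (m + u)) := by
      intro u hu
      obtain ⟨hu0, hu2⟩ := hu
      have h1 : m - u ∈ Set.Ici (N:ℝ) := by
        simp only [Set.mem_Ici, hm]; linarith
      have h2 : m + u ∈ Set.Ici (N:ℝ) := by
        simp only [Set.mem_Ici, hm]; linarith
      have hne : m - u ≠ m + u := by intro h; linarith [sub_eq_iff_eq_add.mp h]
      have h := hconv.2 h1 h2 hne (by norm_num : (0:ℝ) < 1/2) (by norm_num : (0:ℝ) < 1/2)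
        (by norm_num)
      simp only [smul_eq_mul] at h
      have harg : 1/2 * (m - u) + 1/2 * (m + u) = m := by ring
      rw [harg] at h
      linarith
    have hc1 : ContinuousOn (fun u : ℝ => 1 / (t + Real.log (m + u))) (Set.Icc 0 (1/2)) := by
      apply hcont.comp (continuous_const.add continuous_id).continuousOn
      intro u hu
      simp only [Set.mem_Ici, hm]
      have := hu.1
      simp only [Pi.add_apply, id] at *
      linarith
    have hc2 : ContinuousOn (fun u : ℝ => 1 / (t + Real.log (m - u))) (Set.Icc 0 (1/2)) := by
      apply hcont.comp (continuous_const.sub continuous_id).continuousOn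
      intro u hu
      simp only [Set.mem_Ici, hm]
      have := hu.2
      simp only [Pi.sub_apply, id] at *
      linarith
    have hlt : (∫ _ in (0:ℝ)..(1/2), 2 * (1 / (t + Real.log m))) <
        ∫ u in (0:ℝ)..(1/2), (1 / (t + Real.log (m - u)) + 1 / (t + Real.log (m + u))) := by
      apply intervalIntegral.integral_lt_integral_of_continuousOn_of_le_of_exists_lt
        (by norm_num) continuousOn_const (hc2.add hc1)
        (fun u hu => (key u hu).le)
      exact ⟨1/2, ⟨by norm_num, le_refl _⟩, key (1/2) ⟨by norm_num, le_refl _⟩⟩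
    have hL : (∫ _ in (0:ℝ)..(1/2), 2 * (1 / (t + Real.log m))) = 1 / (t + Real.log m) := by
      rw [intervalIntegral.integral_const, smul_eq_mul]
      ring
    have hR : (∫ u in (0:ℝ)..(1/2),
        (1 / (t + Real.log (m - u)) + 1 / (t + Real.log (m + u)))) =
        ∫ x in c..(c+1), 1 / (t + Real.log x) := by
      rw [intervalIntegral.integral_add
        (hc2.intervalIntegrable_of_Icc (by norm_num))
        (hc1.intervalIntegrable_of_Icc (by norm_num))]
      have e1 : (∫ u in (0:ℝ)..(1/2), 1 / (t + Real.log (m + u)))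
          = ∫ x in m..(m + 1/2), 1 / (t + Real.log x) := by
        rw [intervalIntegral.integral_comp_add_left (fun x => 1 / (t + Real.log x)) m]
        norm_num
      have e2 : (∫ u in (0:ℝ)..(1/2), 1 / (t + Real.log (m - u)))
          = ∫ x in (m - 1/2)..m, 1 / (t + Real.log x) := by
        rw [intervalIntegral.integral_comp_sub_left (fun x => 1 / (t + Real.log x)) m]
        norm_num
      rw [e1, e2]
      have h3 := intervalIntegral.integral_add_adjacent_intervals
        (hint (m - 1/2) m (by simp [hm]; linarith) (by simp [hm]; linarith))
        (hint m (m + 1/2) (by simp [hm]; linarith) (by simp [hm]; linarith))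
      rw [h3]
      have : m - 1/2 = c := by rw [hm]; ring
      rw [this]
      have : m + 1/2 = c + 1 := by rw [hm]; ring
      rw [this]
    rw [hL, hR] at hlt
    exact hlt
  -- upper bound per interval
  have hupper : ∀ c : ℝ, (N:ℝ) ≤ c →
      (∫ x in c..(c+1), 1 / (t + Real.log x)) ≤ 1 / (t + Real.log c) := by
    intro c hc
    have h := intervalIntegral.integral_mono_on (by linarith : c ≤ c + 1)
      (hint c (c+1) hc (by linarith))
      (intervalIntegrable_const (c := 1 / (t + Real.log c)))
      (fun x hx => hanti c x hc hx.1)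
    rw [intervalIntegral.integral_const] at h
    simpa using h
  -- step formula
  have hstep : ∀ n : ℕ, N ≤ n → deltaSeq N t (n+1) = deltaSeq N t n +
      ((∫ x in ((n:ℝ)+1)..((n:ℝ)+1+1), 1 / (t + Real.log x))
        - 1 / (t + Real.log ((n:ℝ)+1+1/2))) := by
    intro n hn
    have hNn : (N:ℝ) ≤ (n:ℝ) + 1 := by
      have : (N:ℝ) ≤ (n:ℝ) := by exact_mod_cast hn
      linarith
    have hsplit := intervalIntegral.integral_add_adjacent_intervals
      (hint (N:ℝ) ((n:ℝ)+1) le_rfl hNn)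
      (hint ((n:ℝ)+1) ((n:ℝ)+1+1) hNn (by linarith))
    have hsum := Finset.sum_Icc_succ_top (Nat.le_succ_of_le hn)
      (fun k : ℕ => 1 / (t + Real.log ((k:ℝ) + 1/2)))
    simp only [deltaSeq]
    push_cast
    rw [hsum]
    push_cast
    rw [← hsplit]
    ring
  -- strict monotonicity
  have hsucc : ∀ n : ℕ, N ≤ n → deltaSeq N t n < deltaSeq N t (n+1) := by
    intro n hn
    rw [hstep n hn]
    have hNn : (N:ℝ) ≤ (n:ℝ) + 1 := by
      have : (N:ℝ) ≤ (n:ℝ) := by exact_mod_cast hn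
      linarith
    have := hmid ((n:ℝ)+1) hNn
    linarith
  -- positivity
  have hposn : ∀ n : ℕ, N ≤ n → 0 < deltaSeq N t n := by
    intro n hn
    induction n, hn using Nat.le_induction with
    | base =>
      simp only [deltaSeq, Finset.Icc_self, Finset.sum_singleton]
      have := hmid (N:ℝ) le_rfl
      linarith
    | succ n hn ih => exact lt_trans ih (hsucc n hn)
  -- boundedness
  have hbd : ∀ n : ℕ, N ≤ n →
      deltaSeq N t n + 1 / (t + Real.log ((n:ℝ) + 1)) ≤ 1 / (t + Real.log N) := by
    intro n hn
    induction n, hn using Nat.le_induction with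
    | base =>
      simp only [deltaSeq, Finset.Icc_self, Finset.sum_singleton]
      have h1 := hupper (N:ℝ) le_rfl
      have h2 := hanti ((N:ℝ) + 1/2) ((N:ℝ) + 1) (by linarith) (by linarith)
      linarith
    | succ n hn ih =>
      rw [hstep n hn]
      have hNn : (N:ℝ) ≤ (n:ℝ) + 1 := by
        have : (N:ℝ) ≤ (n:ℝ) := by exact_mod_cast hn
        linarith
      have h1 := hupper ((n:ℝ)+1) hNn
      have h2 := hanti ((n:ℝ)+1+1/2) ((n:ℝ)+1+1) (by linarith) (by linarith)
      push_cast
      linarith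
  have hBnd : ∀ n : ℕ, N ≤ n → deltaSeq N t n ≤ 1 / (t + Real.log N) := by
    intro n hn
    have h := hbd n hn
    have hNn : (N:ℝ) ≤ (n:ℝ) + 1 := by
      have : (N:ℝ) ≤ (n:ℝ) := by exact_mod_cast hn
      linarith
    have hp : 0 < 1 / (t + Real.log ((n:ℝ) + 1)) := by
      exact one_div_pos.mpr (hposx _ hNn)
    linarith
  refine ⟨hposn, hsucc, ⟨1 / (t + Real.log N), hBnd⟩, ?_⟩
  -- limit
  set g : ℕ → ℝ := fun k => deltaSeq N t (k + N) with hg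
  have hmono : Monotone g := by
    apply monotone_nat_of_le_succ
    intro k
    have h := (hsucc (k + N) (Nat.le_add_left N k)).le
    simpa [hg, Nat.succ_add, Nat.add_right_comm] using h
  have hbdd : BddAbove (Set.range g) := by
    refine ⟨1 / (t + Real.log N), ?_⟩
    rintro x ⟨k, rfl⟩
    exact hBnd (k + N) (Nat.le_add_left N k)
  have htend : Tendsto g atTop (𝓝 (⨆ i, g i)) := tendsto_atTop_ciSup hmono hbdd
  refine ⟨⨆ i, g i, ?_, (tendsto_add_atTop_iff_nat N).mp htend⟩
  have h0' : 0 < g 0 := by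
    simpa [hg] using hposn N le_rfl
  exact lt_of_lt_of_le h0' (le_ciSup hbdd 0)
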